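/- Let (E, μ) be a probability space, p ∈ [1, ∞), l ≥ 1 an integer. Let g : [-1,1]^l → ℝ be continuous with modulus of continuity (w_{g,1}, ..., w_{g,l}), i.e., each w_{g,j} : [0,2] → ℝ₊ is continuous, nondecreasing, concave with w_{g,j}(0)=0, and |g(x) - g(y)| ≤ Σ_{j=1}^l w_{g,j}(|x_j - y_j|) for all x, y ∈ [-1,1]^l. Let f : [-1,1]^l → ℝ be bounded, and let t, u : E → [-1,1]^l be measurable. Then ‖g∘u - f∘t‖_p ≤ sup_{z ∈ [-1,1]^l} |g(z) - f(z)| + 2^{1/p} Σ_{j=1}^l w_{g,j}(‖u_j - t_j‖_p). -/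

import Mathlib

open MeasureTheory Set
open scoped ENNReal

lemma mink_sum {E : Type*} [MeasurableSpace E] (μ : Measure E) {p : ℝ} (hp : 1 ≤ p)
    {ι : Type*} (s : Finset ι) (F : ι → E → ℝ≥0∞) (hF : ∀ j, Measurable (F j)) :
    (∫⁻ x, (∑ j ∈ s, F j x) ^ p ∂μ) ^ (1/p) ≤ ∑ j ∈ s, (∫⁻ x, F j x ^ p ∂μ) ^ (1/p) := by
  classical
  have hp0 : (0:ℝ) < p := lt_of_lt_of_le zero_lt_one hp
  induction s using Finset.induction with
  | empty =>
      have h1 : (∫⁻ _x, (0:ℝ≥0∞) ^ p ∂μ) = 0 := by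
        simp [ENNReal.zero_rpow_of_pos hp0]
      simp only [Finset.sum_empty]
      rw [h1, ENNReal.zero_rpow_of_pos (one_div_pos.mpr hp0)]
  | @insert a s' hne ih =>
      simp only [Finset.sum_insert hne]
      calc (∫⁻ x, (F a x + ∑ j ∈ s', F j x) ^ p ∂μ) ^ (1/p)
          ≤ (∫⁻ x, F a x ^ p ∂μ) ^ (1/p) + (∫⁻ x, (∑ j ∈ s', F j x) ^ p ∂μ) ^ (1/p) :=
            ENNReal.lintegral_Lp_add_le (hF a).aemeasurable
              (Finset.measurable_sum s' (fun j _ => hF j)).aemeasurable hp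
        _ ≤ _ := add_le_add_right ih _

lemma int_conv {E : Type*} [MeasurableSpace E] (μ : Measure E) {p : ℝ} (hp0 : 0 < p) (h : E → ℝ)
    (hint : Integrable (fun x => |h x| ^ p) μ) :
    ∫ x, |h x| ^ p ∂μ = (∫⁻ x, (ENNReal.ofReal |h x|) ^ p ∂μ).toReal ∧
      (∫⁻ x, (ENNReal.ofReal |h x|) ^ p ∂μ) ≠ ∞ := by
  have hpt : (fun x => ENNReal.ofReal (|h x| ^ p)) = fun x => (ENNReal.ofReal |h x|) ^ p := by
    funext x
    exact (ENNReal.ofReal_rpow_of_nonneg (abs_nonneg _) hp0.le).symm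
  constructor
  · rw [integral_eq_lintegral_of_nonneg_ae
      (Filter.Eventually.of_forall fun x => Real.rpow_nonneg (abs_nonneg _) p)
      hint.aestronglyMeasurable]
    rw [hpt]
  · have := hint.lintegral_lt_top
    rw [hpt] at this
    exact this.ne

lemma key_j {E : Type*} [MeasurableSpace E] (μ : Measure E) [IsProbabilityMeasure μ]
    {p : ℝ} (hp : 1 ≤ p)
    (w : ℝ → ℝ) (hw_mono : MonotoneOn w (Icc 0 2)) (hw_concave : ConcaveOn ℝ (Icc 0 2) w)
    (hw_nonneg : ∀ z ∈ Icc (0:ℝ) 2, 0 ≤ w z) (hw0 : w 0 = 0)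
    (d : E → ℝ) (hd_meas : Measurable d) (hd2 : ∀ x, |d x| ∈ Icc (0:ℝ) 2)
    (hint : Integrable (fun x => |d x| ^ p) μ) :
    (∫⁻ x, (ENNReal.ofReal (w |d x|)) ^ p ∂μ) ^ (1/p)
      ≤ ENNReal.ofReal (2 ^ (1/p) * w ((∫ x, |d x| ^ p ∂μ) ^ (1/p))) := by
  have hp0 : (0:ℝ) < p := lt_of_lt_of_le zero_lt_one hp
  have hp0' : p ≠ 0 := hp0.ne'
  set I := ∫ x, |d x| ^ p ∂μ with hIdef
  set a := I ^ (1/p) with hadef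
  have hI0 : 0 ≤ I := integral_nonneg fun x => Real.rpow_nonneg (abs_nonneg _) _
  have ha0 : 0 ≤ a := Real.rpow_nonneg hI0 _
  obtain ⟨hIeq, hLne⟩ := int_conv μ hp0 d hint
  set L := ∫⁻ x, (ENNReal.ofReal |d x|) ^ p ∂μ with hLdef
  have hap : a ^ p = I := by
    rw [hadef, ← Real.rpow_mul hI0, one_div_mul_cancel hp0', Real.rpow_one]
  rw [← hIdef] at hIeq
  have hL : L = ENNReal.ofReal (a ^ p) := by
    rw [hap, hIeq, ENNReal.ofReal_toReal hLne]
  have ha2 : a ≤ 2 := by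
    have hIle : I ≤ 2 ^ p := by
      have hpt : ∀ x, |d x| ^ p ≤ (2:ℝ) ^ p := fun x =>
        Real.rpow_le_rpow (abs_nonneg _) (hd2 x).2 hp0.le
      calc I ≤ ∫ _x, (2:ℝ) ^ p ∂μ := integral_mono hint (integrable_const _) hpt
        _ = 2 ^ p := by simp
    calc a ≤ ((2:ℝ) ^ p) ^ (1/p) := Real.rpow_le_rpow hI0 hIle (by positivity)
      _ = 2 := by rw [← Real.rpow_mul (by norm_num), mul_one_div_cancel hp0', Real.rpow_one]
  have hamem : a ∈ Icc (0:ℝ) 2 := ⟨ha0, ha2⟩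
  have hwa0 : 0 ≤ w a := hw_nonneg a hamem
  have hme : Measurable fun x => (ENNReal.ofReal |d x|) ^ p :=
    (ENNReal.measurable_ofReal.comp hd_meas.abs).pow_const p
  by_cases ha : a = 0
  · have hL0 : L = 0 := by rw [hL, ha, Real.zero_rpow hp0', ENNReal.ofReal_zero]
    have hae : ∀ᵐ x ∂μ, (ENNReal.ofReal |d x|) ^ p = 0 :=
      (lintegral_eq_zero_iff hme).mp hL0
    have hae2 : ∀ᵐ x ∂μ, ENNReal.ofReal (w |d x|) ^ p = 0 := by
      filter_upwards [hae] with x hx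
      have h1 : ENNReal.ofReal |d x| = 0 := by
        rcases ENNReal.rpow_eq_zero_iff.mp hx with ⟨h, _⟩ | ⟨_, hneg⟩
        · exact h
        · exact absurd hneg (not_lt.mpr hp0.le)
      have h2 : |d x| = 0 := le_antisymm (by simpa [ENNReal.ofReal_eq_zero] using h1) (abs_nonneg _)
      rw [h2, hw0, ENNReal.ofReal_zero, ENNReal.zero_rpow_of_pos hp0]
    rw [lintegral_congr_ae hae2, lintegral_zero,
      ENNReal.zero_rpow_of_pos (one_div_pos.mpr hp0)]
    exact zero_le
  · have hapos : 0 < a := lt_of_le_of_ne ha0 (Ne.symm ha)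
    have hptw : ∀ s ∈ Icc (0:ℝ) 2, w s ^ p ≤ w a ^ p + (w a / a) ^ p * s ^ p := by
      intro s hs
      by_cases hsa : s ≤ a
      · have h1 : w s ≤ w a := hw_mono hs hamem hsa
        have h2 : w s ^ p ≤ w a ^ p := Real.rpow_le_rpow (hw_nonneg s hs) h1 hp0.le
        have h3 : 0 ≤ (w a / a) ^ p * s ^ p :=
          mul_nonneg (Real.rpow_nonneg (div_nonneg hwa0 ha0) _) (Real.rpow_nonneg hs.1 _)
        linarith
      · push_neg at hsa
        have hspos : 0 < s := lt_trans hapos hsa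
        have hsub : (0:ℝ) ≤ 1 - a / s := by
          rw [sub_nonneg]
          exact (div_le_one hspos).mpr hsa.le
        have hcc := hw_concave.2 hs (show (0:ℝ) ∈ Icc (0:ℝ) 2 by norm_num)
          (div_nonneg ha0 hspos.le) hsub (by ring)
        simp only [smul_eq_mul, hw0, mul_zero, add_zero] at hcc
        rw [div_mul_cancel₀ a hspos.ne'] at hcc
        have hws : w s ≤ w a * s / a := by
          have h5 := mul_le_mul_of_nonneg_left hcc (le_of_lt (div_pos hspos hapos))
          calc w s = s / a * (a / s * w s) := by field_simp
            _ ≤ s / a * w a := h5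
            _ = w a * s / a := by ring
        have h2 : w s ^ p ≤ (w a * s / a) ^ p :=
          Real.rpow_le_rpow (hw_nonneg s hs) hws hp0.le
        have h3 : (w a * s / a) ^ p = (w a / a) ^ p * s ^ p := by
          rw [← Real.mul_rpow (div_nonneg hwa0 hapos.le) hs.1, div_mul_eq_mul_div]
        have h4 : 0 ≤ w a ^ p := Real.rpow_nonneg hwa0 _
        rw [h3] at h2
        linarith
    have hLb : (∫⁻ x, (ENNReal.ofReal (w |d x|)) ^ p ∂μ) ≤ 2 * ENNReal.ofReal (w a ^ p) := by
      calc (∫⁻ x, (ENNReal.ofReal (w |d x|)) ^ p ∂μ)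
          ≤ ∫⁻ x, (ENNReal.ofReal (w a ^ p)
              + ENNReal.ofReal ((w a / a) ^ p) * (ENNReal.ofReal |d x|) ^ p) ∂μ := by
            apply lintegral_mono
            intro x
            dsimp only
            rw [ENNReal.ofReal_rpow_of_nonneg (hw_nonneg _ (hd2 x)) hp0.le,
              ENNReal.ofReal_rpow_of_nonneg (abs_nonneg _) hp0.le,
              ← ENNReal.ofReal_mul (Real.rpow_nonneg (div_nonneg hwa0 ha0) _),
              ← ENNReal.ofReal_add (Real.rpow_nonneg hwa0 _)
                (mul_nonneg (Real.rpow_nonneg (div_nonneg hwa0 ha0) _)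
                  (Real.rpow_nonneg (abs_nonneg _) _))]
            exact ENNReal.ofReal_le_ofReal (hptw _ (hd2 x))
        _ = ENNReal.ofReal (w a ^ p) + ENNReal.ofReal ((w a / a) ^ p) * L := by
            rw [lintegral_add_left measurable_const, lintegral_const_mul _ hme,
              lintegral_const, measure_univ, mul_one]
        _ = 2 * ENNReal.ofReal (w a ^ p) := by
            rw [hL, ← ENNReal.ofReal_mul (Real.rpow_nonneg (div_nonneg hwa0 ha0) _),
              ← Real.mul_rpow (div_nonneg hwa0 ha0) ha0,
              div_mul_cancel₀ _ hapos.ne', two_mul]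
    calc (∫⁻ x, (ENNReal.ofReal (w |d x|)) ^ p ∂μ) ^ (1/p)
        ≤ (2 * ENNReal.ofReal (w a ^ p)) ^ (1/p) :=
          ENNReal.rpow_le_rpow hLb (by positivity)
      _ = 2 ^ (1/p) * (ENNReal.ofReal (w a ^ p)) ^ (1/p) :=
          ENNReal.mul_rpow_of_nonneg _ _ (by positivity)
      _ = ENNReal.ofReal (2 ^ (1/p) * w a) := by
          rw [show ((2:ℝ≥0∞) = ENNReal.ofReal 2) by simp,
            ENNReal.ofReal_rpow_of_nonneg (by norm_num) (by positivity),
            ENNReal.ofReal_rpow_of_nonneg (Real.rpow_nonneg hwa0 _) (by positivity),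
            ← Real.rpow_mul hwa0, mul_one_div_cancel hp0', Real.rpow_one,
            ← ENNReal.ofReal_mul (Real.rpow_nonneg (by norm_num) _)]

lemma mink_head {E : Type*} [MeasurableSpace E] (μ : Measure E) {p : ℝ} (hp : 1 ≤ p)
    {ι : Type*} (s : Finset ι) (c : ℝ≥0∞) (F : ι → E → ℝ≥0∞) (hF : ∀ j, Measurable (F j)) :
    (∫⁻ x, (c + ∑ j ∈ s, F j x) ^ p ∂μ) ^ (1/p)
      ≤ (∫⁻ _x, c ^ p ∂μ) ^ (1/p) + ∑ j ∈ s, (∫⁻ x, F j x ^ p ∂μ) ^ (1/p) := by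
  have h := ENNReal.lintegral_Lp_add_le (μ := μ) (f := fun _ : E => c)
    (g := fun x => ∑ j ∈ s, F j x) measurable_const.aemeasurable
    (Finset.measurable_sum s fun j _ => hF j).aemeasurable hp
  simp only [Pi.add_apply] at h
  exact h.trans (add_le_add_right (mink_sum μ hp s F hF) _)

lemma a_mem {E : Type*} [MeasurableSpace E] (μ : Measure E) [IsProbabilityMeasure μ]
    {p : ℝ} (hp0 : 0 < p) (d : E → ℝ) (hd2 : ∀ x, |d x| ∈ Icc (0:ℝ) 2)
    (hint : Integrable (fun x => |d x| ^ p) μ) :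
    (∫ x, |d x| ^ p ∂μ) ^ (1/p) ∈ Icc (0:ℝ) 2 := by
  have hI0 : 0 ≤ ∫ x, |d x| ^ p ∂μ := integral_nonneg fun x => Real.rpow_nonneg (abs_nonneg _) _
  refine ⟨Real.rpow_nonneg hI0 _, ?_⟩
  have hIle : (∫ x, |d x| ^ p ∂μ) ≤ 2 ^ p := by
    have hpt : ∀ x, |d x| ^ p ≤ (2:ℝ) ^ p := fun x =>
      Real.rpow_le_rpow (abs_nonneg _) (hd2 x).2 hp0.le
    calc (∫ x, |d x| ^ p ∂μ) ≤ ∫ _x, (2:ℝ) ^ p ∂μ := integral_mono hint (integrable_const _) hpt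
      _ = 2 ^ p := by simp
  calc (∫ x, |d x| ^ p ∂μ) ^ (1/p) ≤ ((2:ℝ) ^ p) ^ (1/p) :=
        Real.rpow_le_rpow hI0 hIle (by positivity)
    _ = 2 := by rw [← Real.rpow_mul (by norm_num), mul_one_div_cancel hp0.ne', Real.rpow_one]

/-- Proposition: `‖g∘u - f∘t‖_p ≤ d_∞(g,f) + 2^{1/p} ∑_j w_{g,j}(‖u_j - t_j‖_p)`. -/
theorem stmt_3 {E : Type*} [MeasurableSpace E] (μ : Measure E) [IsProbabilityMeasure μ]
    (p : ℝ) (hp : 1 ≤ p) (l : ℕ) (hl : 1 ≤ l)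
    (g f : (Fin l → ℝ) → ℝ) (w : Fin l → ℝ → ℝ)
    (hg_cont : ContinuousOn g (Set.pi univ (fun _ => Icc (-1:ℝ) 1)))
    (hf_bdd : ∃ M : ℝ, ∀ z ∈ Set.pi univ (fun _ => Icc (-1:ℝ) 1), |f z| ≤ M)
    (hw_cont : ∀ j, ContinuousOn (w j) (Icc (0:ℝ) 2))
    (hw_mono : ∀ j, MonotoneOn (w j) (Icc (0:ℝ) 2))
    (hw_concave : ∀ j, ConcaveOn ℝ (Icc (0:ℝ) 2) (w j))
    (hw_nonneg : ∀ j, ∀ z ∈ Icc (0:ℝ) 2, 0 ≤ w j z)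
    (hw0 : ∀ j, w j 0 = 0)
    (hmod : ∀ x y : Fin l → ℝ, (∀ j, x j ∈ Icc (-1:ℝ) 1) → (∀ j, y j ∈ Icc (-1:ℝ) 1) →
      |g x - g y| ≤ ∑ j, w j |x j - y j|)
    (u t : E → Fin l → ℝ)
    (hu : ∀ x, ∀ j, u x j ∈ Icc (-1:ℝ) 1) (ht : ∀ x, ∀ j, t x j ∈ Icc (-1:ℝ) 1)
    (hu_meas : Measurable u) (ht_meas : Measurable t)
    (hint : Integrable (fun x => |g (u x) - f (t x)| ^ p) μ)
    (hint' : ∀ j, Integrable (fun x => |u x j - t x j| ^ p) μ) :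
    (∫ x, |g (u x) - f (t x)| ^ p ∂μ) ^ (1 / p)
      ≤ (⨆ z : (Set.pi univ (fun _ : Fin l => Icc (-1:ℝ) 1)), |g z - f z|)
        + 2 ^ (1 / p) * ∑ j, w j ((∫ x, |u x j - t x j| ^ p ∂μ) ^ (1 / p)) := by
  classical
  have hp0 : (0:ℝ) < p := lt_of_lt_of_le zero_lt_one hp
  have hp0' : p ≠ 0 := hp0.ne'
  set D := ⨆ z : (Set.pi univ (fun _ : Fin l => Icc (-1:ℝ) 1)), |g z - f z| with hDdef
  obtain ⟨Cg, hCg⟩ :=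
    (isCompact_univ_pi fun _ : Fin l => isCompact_Icc).exists_bound_of_continuousOn hg_cont
  obtain ⟨M, hM⟩ := hf_bdd
  have hbdd : BddAbove (Set.range fun z : (Set.pi univ (fun _ : Fin l => Icc (-1:ℝ) 1)) =>
      |g z - f z|) := by
    refine ⟨Cg + M, ?_⟩
    rintro _ ⟨z, rfl⟩
    have h1 : |g z| ≤ Cg := by simpa [Real.norm_eq_abs] using hCg z z.2
    have h2 : |f z| ≤ M := hM z z.2
    have h3 : |g (z:Fin l → ℝ) - f z| ≤ |g (z:Fin l → ℝ)| + |f z| := by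
      have := abs_add_le (g z) (-(f z)); simpa [sub_eq_add_neg] using this
    linarith
  have hDle : ∀ y : Fin l → ℝ, (∀ j, y j ∈ Icc (-1:ℝ) 1) → |g y - f y| ≤ D := by
    intro y hy
    exact le_ciSup hbdd (⟨y, fun j _ => hy j⟩ :
      (Set.pi univ (fun _ : Fin l => Icc (-1:ℝ) 1)))
  have hD0 : 0 ≤ D :=
    le_trans (abs_nonneg _) (hDle (fun _ => 0) (fun j => by norm_num))
  have hd_meas : ∀ j, Measurable fun x => u x j - t x j := fun j =>
    ((measurable_pi_apply j).comp hu_meas).sub ((measurable_pi_apply j).comp ht_meas)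
  have hd2 : ∀ j x, |u x j - t x j| ∈ Icc (0:ℝ) 2 := by
    intro j x
    refine ⟨abs_nonneg _, ?_⟩
    have h1 : |u x j| ≤ 1 := abs_le.mpr ⟨(hu x j).1, (hu x j).2⟩
    have h2 : |t x j| ≤ 1 := abs_le.mpr ⟨(ht x j).1, (ht x j).2⟩
    have h3 : |u x j - t x j| ≤ |u x j| + |t x j| := by
      have := abs_add_le (u x j) (-(t x j)); simpa [sub_eq_add_neg] using this
    linarith
  have hwF_meas : ∀ j, Measurable fun x => ENNReal.ofReal (w j |u x j - t x j|) := by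
    intro j
    have hcl : Continuous fun s : ℝ => w j (min 2 (max 0 s)) := by
      apply (hw_cont j).comp_continuous
      · exact continuous_const.min (continuous_const.max continuous_id)
      · intro s; exact ⟨le_min (by norm_num) (le_max_left _ _), min_le_left _ _⟩
    have heq : (fun x => w j |u x j - t x j|)
        = fun x => w j (min 2 (max 0 |u x j - t x j|)) := by
      funext x
      rw [max_eq_right (hd2 j x).1, min_eq_right (hd2 j x).2]
    have hm2 : Measurable fun x => w j (min 2 (max 0 |u x j - t x j|)) :=
      hcl.measurable.comp (hd_meas j).abs
    rw [← heq] at hm2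
    exact ENNReal.measurable_ofReal.comp hm2
  have hptw : ∀ x, ENNReal.ofReal |g (u x) - f (t x)|
      ≤ ENNReal.ofReal D + ∑ j, ENNReal.ofReal (w j |u x j - t x j|) := by
    intro x
    have h2 : |g (u x) - f (t x)| ≤ |g (u x) - g (t x)| + |g (t x) - f (t x)| :=
      abs_sub_le _ _ _
    have h3 := hmod (u x) (t x) (hu x) (ht x)
    have h4 := hDle (t x) (ht x)
    have h1 : |g (u x) - f (t x)| ≤ D + ∑ j, w j |u x j - t x j| := by linarith
    calc ENNReal.ofReal |g (u x) - f (t x)|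
        ≤ ENNReal.ofReal (D + ∑ j, w j |u x j - t x j|) := ENNReal.ofReal_le_ofReal h1
      _ = _ := by
        rw [ENNReal.ofReal_add hD0 (Finset.sum_nonneg fun j _ => hw_nonneg j _ (hd2 j x)),
          ENNReal.ofReal_sum_of_nonneg (fun j _ => hw_nonneg j _ (hd2 j x))]
  have hmain : (∫⁻ x, (ENNReal.ofReal |g (u x) - f (t x)|) ^ p ∂μ) ^ (1/p)
      ≤ ENNReal.ofReal D
        + ∑ j, ENNReal.ofReal (2 ^ (1/p) * w j ((∫ x, |u x j - t x j| ^ p ∂μ) ^ (1/p))) := by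
    calc (∫⁻ x, (ENNReal.ofReal |g (u x) - f (t x)|) ^ p ∂μ) ^ (1/p)
        ≤ (∫⁻ x, (ENNReal.ofReal D
            + ∑ j, ENNReal.ofReal (w j |u x j - t x j|)) ^ p ∂μ) ^ (1/p) := by
          apply ENNReal.rpow_le_rpow _ (by positivity)
          exact lintegral_mono fun x => ENNReal.rpow_le_rpow (hptw x) hp0.le
      _ ≤ (∫⁻ _x, (ENNReal.ofReal D) ^ p ∂μ) ^ (1/p)
          + ∑ j, (∫⁻ x, (ENNReal.ofReal (w j |u x j - t x j|)) ^ p ∂μ) ^ (1/p) :=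
          mink_head μ hp Finset.univ (ENNReal.ofReal D)
            (fun j x => ENNReal.ofReal (w j |u x j - t x j|)) hwF_meas
      _ ≤ ENNReal.ofReal D
          + ∑ j, ENNReal.ofReal (2 ^ (1/p) * w j ((∫ x, |u x j - t x j| ^ p ∂μ) ^ (1/p))) := by
          apply add_le_add
          · rw [lintegral_const, measure_univ, mul_one, ← ENNReal.rpow_mul,
              mul_one_div_cancel hp0', ENNReal.rpow_one]
          · exact Finset.sum_le_sum fun j _ =>
              key_j μ hp (w j) (hw_mono j) (hw_concave j) (hw_nonneg j) (hw0 j)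
                (fun x => u x j - t x j) (hd_meas j) (hd2 j) (hint' j)
  obtain ⟨hIeq, hLne⟩ := int_conv μ hp0 (fun x => g (u x) - f (t x)) hint
  rw [hIeq, ENNReal.toReal_rpow]
  have hwa0 : ∀ j, 0 ≤ 2 ^ (1/p) * w j ((∫ x, |u x j - t x j| ^ p ∂μ) ^ (1/p)) := fun j =>
    mul_nonneg (Real.rpow_nonneg (by norm_num) _)
      (hw_nonneg j _ (a_mem μ hp0 (fun x => u x j - t x j) (hd2 j) (hint' j)))
  have hRne : (ENNReal.ofReal D
      + ∑ j, ENNReal.ofReal (2 ^ (1/p) * w j ((∫ x, |u x j - t x j| ^ p ∂μ) ^ (1/p)))) ≠ ⊤ := by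
    apply ENNReal.add_ne_top.mpr
    exact ⟨ENNReal.ofReal_ne_top, by
      rw [Ne, ENNReal.sum_eq_top]
      push_neg
      exact fun j _ => ENNReal.ofReal_ne_top⟩
  have hfin := ENNReal.toReal_mono hRne hmain
  rw [ENNReal.toReal_add ENNReal.ofReal_ne_top (by
        rw [Ne, ENNReal.sum_eq_top]; push_neg; exact fun j _ => ENNReal.ofReal_ne_top),
    ENNReal.toReal_ofReal hD0, ENNReal.toReal_sum (fun j _ => ENNReal.ofReal_ne_top)] at hfin
  have hsum : ∀ j ∈ (Finset.univ : Finset (Fin l)),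
      (ENNReal.ofReal (2 ^ (1/p) * w j ((∫ x, |u x j - t x j| ^ p ∂μ) ^ (1/p)))).toReal
        = 2 ^ (1/p) * w j ((∫ x, |u x j - t x j| ^ p ∂μ) ^ (1/p)) := fun j _ =>
    ENNReal.toReal_ofReal (hwa0 j)
  rw [Finset.sum_congr rfl hsum, ← Finset.mul_sum] at hfin
  exact hfin
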